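/- If G is a finite connected simple graph without isolated vertices, then Dom has a winning strategy in the Sepy-start Disjoint Domination Game on G. -/

import Mathlib

namespace DDG

variable {V : Type*}

/-- The closed neighborhood `N[v]` of a vertex `v`. -/
def closedNbhd (G : SimpleGraph V) (v : V) : Set V := insert v (G.neighborSet v)

/-- `D` is a dominating set of `G`: every vertex has a member of `D`
in its closed neighborhood. -/
def Dominates (G : SimpleGraph V) (D : Set V) : Prop :=
  ∀ v : V, (closedNbhd G v ∩ D).Nonempty

/-- A position of the game: the sets of purple and blue vertices. -/
structure Pos (V : Type*) where
  purple : Set V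
  blue : Set V

namespace Pos

/-- The vertex class of a color (`true` = purple, `false` = blue). -/
def colorSet (p : Pos V) (c : Bool) : Set V := if c then p.purple else p.blue

/-- The position obtained by coloring vertex `v` with color `c`. -/
def play (p : Pos V) (v : V) (c : Bool) : Pos V :=
  if c then ⟨insert v p.purple, p.blue⟩ else ⟨p.purple, insert v p.blue⟩

end Pos

/-- A legal move of the Disjoint Domination Game: select an uncolored vertex `v`
and a color `c` such that some `u ∈ N[v]` is not yet dominated in color `c`. -/
def LegalMove (G : SimpleGraph V) (p : Pos V) (v : V) (c : Bool) : Prop :=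
  v ∉ p.purple ∪ p.blue ∧ ∃ u ∈ closedNbhd G v, closedNbhd G u ∩ p.colorSet c = ∅

/-- End condition ⟨s⟩: some closed neighborhood is monochromatic; Sepy wins. -/
def SepyEnd (G : SimpleGraph V) (p : Pos V) : Prop :=
  ∃ v : V, closedNbhd G v ⊆ p.purple ∨ closedNbhd G v ⊆ p.blue

/-- End condition ⟨d⟩: both color classes are dominating sets; Dom wins. -/
def DomEnd (G : SimpleGraph V) (p : Pos V) : Prop :=
  Dominates G p.purple ∧ Dominates G p.blue

/-- `DomWins G turn p` : Dom has a winning strategy in the Disjoint Domination Game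
from position `p`, where `turn = true` iff it is Dom's move. -/
inductive DomWins (G : SimpleGraph V) : Bool → Pos V → Prop
  | terminal (turn : Bool) (p : Pos V) :
      ¬ SepyEnd G p → DomEnd G p → DomWins G turn p
  | domStep (p : Pos V) (v : V) (c : Bool) :
      ¬ SepyEnd G p → ¬ DomEnd G p → LegalMove G p v c →
      DomWins G false (p.play v c) → DomWins G true p
  | sepyStep (p : Pos V) :
      ¬ SepyEnd G p → ¬ DomEnd G p →
      (∃ v c, LegalMove G p v c) →
      (∀ v c, LegalMove G p v c → DomWins G true (p.play v c)) →
      DomWins G false p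

/-- `SepyWins G turn p` : Sepy has a winning strategy in the Disjoint Domination Game
from position `p`, where `turn = true` iff it is Dom's move. -/
inductive SepyWins (G : SimpleGraph V) : Bool → Pos V → Prop
  | terminal (turn : Bool) (p : Pos V) : SepyEnd G p → SepyWins G turn p
  | sepyStep (p : Pos V) (v : V) (c : Bool) :
      ¬ SepyEnd G p → ¬ DomEnd G p → LegalMove G p v c →
      SepyWins G true (p.play v c) → SepyWins G false p
  | domStep (p : Pos V) :
      ¬ SepyEnd G p → ¬ DomEnd G p →
      (∃ v c, LegalMove G p v c) →
      (∀ v c, LegalMove G p v c → SepyWins G false (p.play v c)) →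
      SepyWins G true p

end DDG


open DDG


namespace DDGAux

variable {V : Type*} {G : SimpleGraph V} {p : Pos V} {u v x y z : V} {c d g : Bool}

theorem mem_cn_self (G : SimpleGraph V) (v : V) : v ∈ closedNbhd G v := Set.mem_insert _ _

theorem mem_cn_iff : u ∈ closedNbhd G v ↔ u = v ∨ G.Adj v u := by
  simp [closedNbhd, SimpleGraph.mem_neighborSet]

theorem mem_cn_of_adj (h : G.Adj v u) : u ∈ closedNbhd G v := mem_cn_iff.mpr (Or.inr h)

theorem cn_comm : u ∈ closedNbhd G v ↔ v ∈ closedNbhd G u := by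
  rw [mem_cn_iff, mem_cn_iff, G.adj_comm, eq_comm]

/-- The set of colored vertices. -/
def colored (p : Pos V) : Set V := p.purple ∪ p.blue

theorem bool_eq_or (d c : Bool) : d = c ∨ d = !c := by cases d <;> cases c <;> simp

theorem colored_eq_union (p : Pos V) (c : Bool) :
    colored p = p.colorSet c ∪ p.colorSet (!c) := by
  cases c <;> simp [colored, Pos.colorSet, Set.union_comm]

theorem colorSet_subset_colored (p : Pos V) (c : Bool) : p.colorSet c ⊆ colored p := by
  rw [colored_eq_union p c]; exact Set.subset_union_left

theorem not_colorSet_of_not_colored (h : v ∉ colored p) (c : Bool) : v ∉ p.colorSet c :=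
  fun hc => h (colorSet_subset_colored p c hc)

theorem colorSet_play_same (p : Pos V) (v : V) (c : Bool) :
    (p.play v c).colorSet c = insert v (p.colorSet c) := by cases c <;> rfl

theorem colorSet_play_ne (p : Pos V) (v : V) (h : d ≠ c) :
    (p.play v c).colorSet d = p.colorSet d := by
  cases c <;> cases d <;> first | rfl | simp at h

theorem colorSet_play_not (p : Pos V) (v : V) (c : Bool) :
    (p.play v c).colorSet (!c) = p.colorSet (!c) :=
  colorSet_play_ne p v (by cases c <;> simp)

theorem colored_play (p : Pos V) (v : V) (c : Bool) :
    colored (p.play v c) = insert v (colored p) := by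
  cases c <;> simp [colored, Pos.play, Set.insert_union, Set.union_insert]

theorem sepyEnd_iff : SepyEnd G p ↔ ∃ (u : V) (c : Bool), closedNbhd G u ⊆ p.colorSet c := by
  constructor
  · rintro ⟨v, h | h⟩
    · exact ⟨v, true, h⟩
    · exact ⟨v, false, h⟩
  · rintro ⟨v, c, h⟩
    cases c
    · exact ⟨v, Or.inr h⟩
    · exact ⟨v, Or.inl h⟩

theorem domEnd_iff : DomEnd G p ↔ ∀ c : Bool, Dominates G (p.colorSet c) := by
  constructor
  · rintro ⟨h1, h2⟩ c; cases c
    · exact h2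
    · exact h1
  · intro h; exact ⟨h true, h false⟩

/-- Every colored vertex has an oppositely colored neighbor. -/
def Q1 (G : SimpleGraph V) (p : Pos V) : Prop :=
  ∀ c : Bool, ∀ v ∈ p.colorSet c, ∃ u, G.Adj v u ∧ u ∈ p.colorSet (!c)

/-- The invariant Dom maintains at Sepy's turn. -/
def Safe (G : SimpleGraph V) (p : Pos V) : Prop :=
  Disjoint p.purple p.blue ∧ ¬ SepyEnd G p ∧ Q1 G p

theorem not_mem_other (hdisj : Disjoint p.purple p.blue) (h : v ∈ p.colorSet c) :
    v ∉ p.colorSet (!c) := by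
  cases c
  · exact fun h' => (Set.disjoint_right.mp hdisj h) h'
  · exact fun h' => (Set.disjoint_left.mp hdisj h) h'

theorem play_true (p : Pos V) (v : V) : p.play v true = ⟨insert v p.purple, p.blue⟩ := rfl
theorem play_false (p : Pos V) (v : V) : p.play v false = ⟨p.purple, insert v p.blue⟩ := rfl

theorem disjoint_play (hdisj : Disjoint p.purple p.blue) (hv : v ∉ colored p) (c : Bool) :
    Disjoint ((p.play v c).purple) ((p.play v c).blue) := by
  rw [colored, Set.mem_union, not_or] at hv
  rw [Set.disjoint_left] at hdisj ⊢
  intro a ha hb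
  cases c
  · rw [play_false] at ha hb
    rcases Set.mem_insert_iff.mp hb with rfl | hb'
    · exact hv.1 ha
    · exact hdisj ha hb'
  · rw [play_true] at ha hb
    rcases Set.mem_insert_iff.mp ha with rfl | ha'
    · exact hv.2 hb
    · exact hdisj ha' hb

theorem exists_legal (hS : ¬ SepyEnd G p) (hD : ¬ DomEnd G p) :
    ∃ v c, LegalMove G p v c := by
  have hfree : ∃ (c : Bool) (u : V), closedNbhd G u ∩ p.colorSet c = ∅ := by
    by_contra h
    push_neg at h
    exact hD (domEnd_iff.mpr fun c v => h c v)
  obtain ⟨c, u, hu⟩ := hfree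
  have huncol : ∃ y ∈ closedNbhd G u, y ∉ colored p := by
    by_contra h
    push_neg at h
    apply hS
    rw [sepyEnd_iff]
    refine ⟨u, !c, fun w hw => ?_⟩
    have hcol := h w hw
    rw [colored_eq_union p c, Set.mem_union] at hcol
    rcases hcol with hc | hc
    · exact absurd (Set.mem_inter hw hc) (by rw [hu]; exact Set.notMem_empty _)
    · exact hc
  obtain ⟨y, hy, hyu⟩ := huncol
  exact ⟨y, c, hyu, u, cn_comm.mp hy, hu⟩

-- L2: from a Q1 position, no legal move creates SepyEnd
theorem play_not_sepyEnd (hiso : ∀ v : V, ∃ u : V, G.Adj v u)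
    (hdisj : Disjoint p.purple p.blue) (hS : ¬ SepyEnd G p) (hQ : Q1 G p)
    (hl : LegalMove G p x c) : ¬ SepyEnd G (p.play x c) := by
  intro h
  rw [sepyEnd_iff] at h
  obtain ⟨u, g, hg⟩ := h
  rcases bool_eq_or g c with rfl | rfl
  · rw [colorSet_play_same] at hg
    have hu := hg (mem_cn_self G u)
    rcases Set.mem_insert_iff.mp hu with rfl | hu
    · -- u = x : all neighbors of x are already colored g
      obtain ⟨hxcol, w, hw, hwc⟩ := hl
      obtain ⟨z, hz⟩ := hiso u
      have hzu : z ≠ u := fun h => G.irrefl (h ▸ hz)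
      have hzc : z ∈ p.colorSet g := by
        rcases Set.mem_insert_iff.mp (hg (mem_cn_of_adj hz)) with h | h
        · exact absurd h hzu
        · exact h
      rcases mem_cn_iff.mp hw with rfl | hadj
      · exact Set.eq_empty_iff_forall_notMem.mp hwc z ⟨mem_cn_of_adj hz, hzc⟩
      · have hwin : w ∈ insert u (p.colorSet g) := hg (mem_cn_of_adj hadj)
        rcases Set.mem_insert_iff.mp hwin with rfl | hwc2
        · exact G.irrefl hadj
        · exact Set.eq_empty_iff_forall_notMem.mp hwc w ⟨mem_cn_self G w, hwc2⟩
    · -- u was already colored g : use its opposite neighbor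
      obtain ⟨o, ho, hoc⟩ := hQ g u hu
      rcases Set.mem_insert_iff.mp (hg (mem_cn_of_adj ho)) with rfl | hocg
      · exact hl.1 (colorSet_subset_colored p (!g) hoc)
      · exact not_mem_other hdisj hocg hoc
  · rw [colorSet_play_not] at hg
    exact hS (sepyEnd_iff.mpr ⟨u, !c, hg⟩)

-- L3: Sepy just played (x,c) and x has no (!c)-colored neighbor.
-- Dom answers (!c) on an uncolored neighbor z of x.
theorem case1 (hiso : ∀ v : V, ∃ u : V, G.Adj v u)
    (hdisj : Disjoint p.purple p.blue) (hS : ¬ SepyEnd G p) (hQ : Q1 G p)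
    (hl : LegalMove G p x c) (h1 : ∀ b, G.Adj x b → b ∉ p.colorSet (!c)) :
    ∃ z, LegalMove G (p.play x c) z (!c) ∧ Safe G ((p.play x c).play z (!c)) := by
  have hcne : c ≠ !c := by cases c <;> simp
  have hncne : (!c) ≠ c := by cases c <;> simp
  obtain ⟨hxcol, w, hw, hwc⟩ := id hl
  have hxcol' : x ∉ colored p := hxcol
  -- find the uncolored neighbor z
  have hzex : ∃ z, G.Adj x z ∧ z ∉ p.colorSet c ∧ z ∉ p.colorSet (!c) := by
    rcases mem_cn_iff.mp hw with rfl | hadj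
    · obtain ⟨z, hz⟩ := hiso w
      exact ⟨z, hz, fun hc => Set.eq_empty_iff_forall_notMem.mp hwc z
        ⟨mem_cn_of_adj hz, hc⟩, h1 z hz⟩
    · exact ⟨w, hadj, fun hc => Set.eq_empty_iff_forall_notMem.mp hwc w
        ⟨mem_cn_self G w, hc⟩, h1 w hadj⟩
  obtain ⟨z, hxz, hzc, hznc⟩ := hzex
  have hzncol : z ∉ colored p := by
    rw [colored_eq_union p c]
    rintro (h | h)
    · exact hzc h
    · exact hznc h
  have hzx : z ≠ x := fun h => G.irrefl (h ▸ hxz)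
  have hzq : z ∉ colored (p.play x c) := by
    rw [colored_play]
    rintro (rfl | h)
    · exact hzx rfl
    · exact hzncol h
  have hxfree : closedNbhd G x ∩ (p.play x c).colorSet (!c) = ∅ := by
    rw [colorSet_play_not]
    apply Set.eq_empty_iff_forall_notMem.mpr
    rintro o ⟨ho, hoc⟩
    rcases mem_cn_iff.mp ho with rfl | hadj
    · exact not_colorSet_of_not_colored hxcol' (!c) hoc
    · exact h1 o hadj hoc
  have hlz : LegalMove G (p.play x c) z (!c) :=
    ⟨hzq, x, cn_comm.mp (mem_cn_of_adj hxz), hxfree⟩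
  refine ⟨z, hlz, ?_, ?_, ?_⟩
  · exact disjoint_play (disjoint_play hdisj hxcol' c) hzq (!c)
  · -- ¬ SepyEnd
    have hrc : ((p.play x c).play z (!c)).colorSet c = insert x (p.colorSet c) := by
      rw [colorSet_play_ne _ _ hcne, colorSet_play_same]
    have hrnc : ((p.play x c).play z (!c)).colorSet (!c) = insert z (p.colorSet (!c)) := by
      rw [colorSet_play_same, colorSet_play_not]
    intro h
    rw [sepyEnd_iff] at h
    obtain ⟨u, g, hg⟩ := h
    rcases bool_eq_or g c with hgc | hgc
    · rw [hgc] at hg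
      apply play_not_sepyEnd hiso hdisj hS hQ hl
      rw [sepyEnd_iff]
      refine ⟨u, c, ?_⟩
      rwa [hrc, ← colorSet_play_same] at hg
    · rw [hgc, hrnc] at hg
      rcases Set.mem_insert_iff.mp (hg (mem_cn_self G u)) with rfl | hu
      · rcases Set.mem_insert_iff.mp (hg (mem_cn_of_adj (hxz.symm))) with h | h
        · exact hzx h.symm
        · exact not_colorSet_of_not_colored hxcol' (!c) h
      · obtain ⟨o, ho, hoc⟩ := hQ (!c) u hu
        rw [Bool.not_not] at hoc
        rcases Set.mem_insert_iff.mp (hg (mem_cn_of_adj ho)) with rfl | h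
        · exact hzc hoc
        · exact not_mem_other hdisj hoc h
  · -- Q1
    have hrc : ((p.play x c).play z (!c)).colorSet c = insert x (p.colorSet c) := by
      rw [colorSet_play_ne _ _ hcne, colorSet_play_same]
    have hrnc : ((p.play x c).play z (!c)).colorSet (!c) = insert z (p.colorSet (!c)) := by
      rw [colorSet_play_same, colorSet_play_not]
    intro d v hv
    rcases bool_eq_or d c with hdc | hdc
    · subst hdc
      rw [hrc] at hv
      rcases Set.mem_insert_iff.mp hv with rfl | hv'
      · exact ⟨z, hxz, by rw [hrnc]; exact Set.mem_insert _ _⟩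
      · obtain ⟨o, ho, hoc⟩ := hQ d v hv'
        exact ⟨o, ho, by rw [hrnc]; exact Set.mem_insert_of_mem _ hoc⟩
    · subst hdc
      rw [hrnc] at hv
      rcases Set.mem_insert_iff.mp hv with rfl | hv'
      · refine ⟨x, hxz.symm, ?_⟩
        rw [Bool.not_not, hrc]
        exact Set.mem_insert _ _
      · obtain ⟨o, ho, hoc⟩ := hQ (!c) v hv'
        rw [Bool.not_not] at hoc ⊢
        exact ⟨o, ho, by rw [hrc]; exact Set.mem_insert_of_mem _ hoc⟩

-- L4: Sepy just played (x,c) and x has a (!c)-colored neighbor.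
theorem case2 (hconn : G.Connected) (hiso : ∀ v : V, ∃ u : V, G.Adj v u)
    (hdisj : Disjoint p.purple p.blue) (hS : ¬ SepyEnd G p) (hQ : Q1 G p)
    (hl : LegalMove G p x c) (h2 : ∃ b, G.Adj x b ∧ b ∈ p.colorSet (!c))
    (hD : ¬ DomEnd G (p.play x c)) :
    ∃ y d, LegalMove G (p.play x c) y d ∧ Safe G ((p.play x c).play y d) := by
  have hxcol : x ∉ colored p := hl.1
  have hdq : Disjoint (p.play x c).purple (p.play x c).blue := disjoint_play hdisj hxcol c
  have hSq : ¬ SepyEnd G (p.play x c) := play_not_sepyEnd hiso hdisj hS hQ hl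
  have hQq : Q1 G (p.play x c) := by
    intro d v hv
    rcases bool_eq_or d c with hdc | hdc
    · subst hdc
      rw [colorSet_play_same] at hv
      rcases Set.mem_insert_iff.mp hv with rfl | hv'
      · obtain ⟨b, hb, hbc⟩ := h2
        exact ⟨b, hb, by rw [colorSet_play_not]; exact hbc⟩
      · obtain ⟨o, ho, hoc⟩ := hQ d v hv'
        exact ⟨o, ho, by rw [colorSet_play_not]; exact hoc⟩
    · subst hdc
      rw [colorSet_play_not] at hv
      obtain ⟨o, ho, hoc⟩ := hQ (!c) v hv
      rw [Bool.not_not] at hoc ⊢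
      exact ⟨o, ho, by rw [colorSet_play_same]; exact Set.mem_insert_of_mem _ hoc⟩
  have main : ∃ y d, LegalMove G (p.play x c) y d ∧
      ∃ o, G.Adj y o ∧ o ∈ (p.play x c).colorSet (!d) := by
    by_contra H
    push_neg at H
    have blank_of_free : ∀ (d : Bool) (u : V),
        closedNbhd G u ∩ (p.play x c).colorSet d = ∅ →
        closedNbhd G u ∩ colored (p.play x c) = ∅ := by
      intro d u hu
      have huncol : u ∉ colored (p.play x c) := by
        intro hcol
        rw [colored_eq_union _ d, Set.mem_union] at hcol
        rcases hcol with h | h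
        · exact Set.eq_empty_iff_forall_notMem.mp hu u ⟨mem_cn_self G u, h⟩
        · obtain ⟨o, ho, hoc⟩ := hQq (!d) u h
          rw [Bool.not_not] at hoc
          exact Set.eq_empty_iff_forall_notMem.mp hu o ⟨mem_cn_of_adj ho, hoc⟩
      have hleg : LegalMove G (p.play x c) u d := ⟨huncol, u, mem_cn_self G u, hu⟩
      apply Set.eq_empty_iff_forall_notMem.mpr
      rintro o ⟨ho, hoc⟩
      rw [colored_eq_union _ d, Set.mem_union] at hoc
      rcases hoc with h | h
      · exact Set.eq_empty_iff_forall_notMem.mp hu o ⟨ho, h⟩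
      · rcases mem_cn_iff.mp ho with rfl | hadj
        · exact huncol (colorSet_subset_colored _ _ h)
        · exact H u d hleg o hadj h
    have blank_step : ∀ u, closedNbhd G u ∩ colored (p.play x c) = ∅ →
        ∀ y, G.Adj u y → closedNbhd G y ∩ colored (p.play x c) = ∅ := by
      intro u hu y hy
      have hycol : y ∉ colored (p.play x c) := fun h =>
        Set.eq_empty_iff_forall_notMem.mp hu y ⟨mem_cn_of_adj hy, h⟩
      have hleg : ∀ d, LegalMove G (p.play x c) y d := by
        intro d
        refine ⟨hycol, u, cn_comm.mp (mem_cn_of_adj hy), ?_⟩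
        apply Set.eq_empty_iff_forall_notMem.mpr
        rintro o ⟨ho, hoc⟩
        exact Set.eq_empty_iff_forall_notMem.mp hu o ⟨ho, colorSet_subset_colored _ _ hoc⟩
      apply Set.eq_empty_iff_forall_notMem.mpr
      rintro o ⟨ho, hoc⟩
      rcases mem_cn_iff.mp ho with rfl | hadj
      · exact hycol hoc
      · rw [colored_eq_union _ true, Set.mem_union] at hoc
        rcases hoc with h | h
        · exact H y false (hleg false) o hadj (by simpa using h)
        · exact H y true (hleg true) o hadj (by simpa using h)
    obtain ⟨d₀, u₀, h₀⟩ : ∃ (d : Bool) (u : V),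
        closedNbhd G u ∩ (p.play x c).colorSet d = ∅ := by
      by_contra h
      push_neg at h
      exact hD (domEnd_iff.mpr fun d v => h d v)
    have key : ∀ (a b : V), G.Walk a b →
        closedNbhd G a ∩ colored (p.play x c) = ∅ →
        closedNbhd G b ∩ colored (p.play x c) = ∅ := by
      intro a b w
      induction w with
      | nil => exact id
      | cons h w ih => intro ha; exact ih (blank_step _ ha _ h)
    obtain ⟨w⟩ := hconn.preconnected u₀ x
    have hxblank := key u₀ x w (blank_of_free d₀ u₀ h₀)
    exact Set.eq_empty_iff_forall_notMem.mp hxblank x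
      ⟨mem_cn_self G x, by rw [colored_play]; exact Set.mem_insert _ _⟩
  obtain ⟨y, d, hly, o, hyo, hod⟩ := main
  have hycol : y ∉ colored (p.play x c) := hly.1
  refine ⟨y, d, hly, disjoint_play hdq hycol d, ?_, ?_⟩
  · -- ¬ SepyEnd after Dom's reply
    intro h
    rw [sepyEnd_iff] at h
    obtain ⟨u, g, hg⟩ := h
    rcases bool_eq_or g d with hgd | hgd
    · rw [hgd, colorSet_play_same] at hg
      rcases Set.mem_insert_iff.mp (hg (mem_cn_self G u)) with rfl | hu
      · rcases Set.mem_insert_iff.mp (hg (mem_cn_of_adj hyo)) with rfl | h'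
        · exact hycol (colorSet_subset_colored _ _ hod)
        · exact not_mem_other hdq h' hod
      · obtain ⟨o', ho', hoc'⟩ := hQq d u hu
        rcases Set.mem_insert_iff.mp (hg (mem_cn_of_adj ho')) with rfl | h'
        · exact hycol (colorSet_subset_colored _ _ hoc')
        · exact not_mem_other hdq h' hoc'
    · rw [hgd, colorSet_play_not] at hg
      exact hSq (sepyEnd_iff.mpr ⟨u, !d, hg⟩)
  · -- Q1 after Dom's reply
    intro e v hv
    rcases bool_eq_or e d with hed | hed
    · subst hed
      rw [colorSet_play_same] at hv
      rcases Set.mem_insert_iff.mp hv with rfl | hv'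
      · exact ⟨o, hyo, by rw [colorSet_play_not]; exact hod⟩
      · obtain ⟨o', ho', hoc'⟩ := hQq e v hv'
        exact ⟨o', ho', by rw [colorSet_play_not]; exact hoc'⟩
    · subst hed
      rw [colorSet_play_not] at hv
      obtain ⟨o', ho', hoc'⟩ := hQq (!d) v hv
      rw [Bool.not_not] at hoc' ⊢
      exact ⟨o', ho', by rw [colorSet_play_same]; exact Set.mem_insert_of_mem _ hoc'⟩

theorem main_ind [Fintype V] (hconn : G.Connected) (hiso : ∀ v : V, ∃ u : V, G.Adj v u) :
    ∀ (k : ℕ) (p : Pos V), Fintype.card V - (colored p).ncard ≤ k →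
      Safe G p → DomWins G false p := by
  intro k
  induction k with
  | zero =>
    rintro p hk ⟨hdisj, hS, hQ⟩
    by_cases hD : DomEnd G p
    · exact DomWins.terminal _ _ hS hD
    · exfalso
      obtain ⟨v, c, hv⟩ := exists_legal hS hD
      have hle : (Set.univ : Set V).ncard ≤ (colored p).ncard := by
        rw [Set.ncard_univ, Nat.card_eq_fintype_card]; omega
      have huniv : colored p = Set.univ :=
        Set.eq_of_subset_of_ncard_le (Set.subset_univ _) hle
      exact hv.1 (by rw [show p.purple ∪ p.blue = colored p from rfl, huniv]; trivial)
  | succ k ih =>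
    rintro p hk ⟨hdisj, hS, hQ⟩
    by_cases hD : DomEnd G p
    · exact DomWins.terminal _ _ hS hD
    refine DomWins.sepyStep p hS hD (exists_legal hS hD) ?_
    intro x c hl
    have hSq : ¬ SepyEnd G (p.play x c) := play_not_sepyEnd hiso hdisj hS hQ hl
    by_cases hDq : DomEnd G (p.play x c)
    · exact DomWins.terminal _ _ hSq hDq
    have hreply : ∃ y d, LegalMove G (p.play x c) y d ∧
        Safe G ((p.play x c).play y d) := by
      by_cases hb : ∃ b, G.Adj x b ∧ b ∈ p.colorSet (!c)
      · exact case2 hconn hiso hdisj hS hQ hl hb hDq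
      · push_neg at hb
        obtain ⟨z, hlz, hsafe⟩ := case1 hiso hdisj hS hQ hl hb
        exact ⟨z, !c, hlz, hsafe⟩
    obtain ⟨y, d, hly, hsafe⟩ := hreply
    refine DomWins.domStep _ y d hSq hDq hly ?_
    apply ih _ ?_ hsafe
    have hx : x ∉ colored p := hl.1
    have hy : y ∉ colored (p.play x c) := hly.1
    have e1 : (colored (p.play x c)).ncard = (colored p).ncard + 1 := by
      rw [colored_play]; exact Set.ncard_insert_of_notMem hx
    have e2 : (colored ((p.play x c).play y d)).ncard = (colored p).ncard + 2 := by
      rw [colored_play, Set.ncard_insert_of_notMem hy, e1]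
    rw [e2]
    omega

end DDGAux

/-- Theorem 3 of the paper: on every finite connected isolate-free
graph, Dom has a winning strategy in the Sepy-start Disjoint Domination Game. -/
theorem statement2 {V : Type*} [Fintype V] (G : SimpleGraph V)
    (hconn : G.Connected) (hiso : ∀ v : V, ∃ u : V, G.Adj v u) :
    DomWins G false ⟨∅, ∅⟩ := by
  apply DDGAux.main_ind hconn hiso (Fintype.card V) ⟨∅, ∅⟩
  · have : DDGAux.colored (⟨∅, ∅⟩ : Pos V) = (∅ : Set V) := by
      simp [DDGAux.colored]
    rw [this]
    simp
  · refine ⟨by simp, ?_, ?_⟩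
    · rintro ⟨v, h | h⟩ <;> exact Set.notMem_empty v (h (DDGAux.mem_cn_self G v))
    · intro c v hv
      cases c <;> simp [Pos.colorSet] at hv
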